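/- The Nijenhuis tensor N vanishes identically (J is integrable, class W₃⊕W₄, i.e. (J,⟨·,·⟩) is Hermitian) if and only if w₀ = 0 and D∘J' = J'∘D. -/

import Mathlib

open scoped BigOperators
open Matrix

noncomputable section

/-- The underlying `2n`-dimensional real vector space `ℝ^{2n}`, whose standard basis
plays the role of the orthonormal basis `e₀, e₁, …, e_{2n-1}`. -/
abbrev G (n : ℕ) := Fin (2*n) → ℝ

/-- The inner product `⟨·,·⟩` making the standard basis orthonormal. -/
def inn {n : ℕ} (x y : G n) : ℝ := ∑ i, x i * y i

/-- The standard basis vector `e k` (indexed by a natural number `k`). -/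
def E (n : ℕ) (k : ℕ) : G n := fun i => if (i : ℕ) = k then 1 else 0

/-- Membership in `a = span{e₂, …, e_{2n-1}}`. -/
def inA {n : ℕ} (x : G n) : Prop := ∀ i : Fin (2*n), (i : ℕ) < 2 → x i = 0

/-- The orthogonal almost complex structure `J e_{2i} = e_{2i+1}`, `J e_{2i+1} = -e_{2i}`. -/
def Jm (n : ℕ) : Matrix (Fin (2*n)) (Fin (2*n)) ℝ :=
  Matrix.of fun k l =>
    if (k : ℕ) = (l : ℕ) + 1 ∧ Even (l : ℕ) then (1 : ℝ)
    else if (l : ℕ) = (k : ℕ) + 1 ∧ Even (k : ℕ) then -1 else 0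

/-- `D` is (the extension by zero of) an endomorphism of `a`: it vanishes on
`span{e₀, e₁}` and takes values orthogonal to `span{e₀, e₁}`. -/
def DinA {n : ℕ} (D : Matrix (Fin (2*n)) (Fin (2*n)) ℝ) : Prop :=
  ∀ k l : Fin (2*n), ((k : ℕ) < 2 ∨ (l : ℕ) < 2) → D k l = 0

/-- The matrix of `L` determined by the data `μ, v₀, w₀, D`, i.e.
`L e₀ = 0`, `L e₁ = μ e₁ + v₀` and `L x = ⟨w₀, x⟩ e₁ + D x` for `x ∈ a`
(for `v₀, w₀ ∈ a` and `D` an endomorphism of `a`). -/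
def Lm {n : ℕ} (μ : ℝ) (v₀ w₀ : G n) (D : Matrix (Fin (2*n)) (Fin (2*n)) ℝ) :
    Matrix (Fin (2*n)) (Fin (2*n)) ℝ :=
  Matrix.of fun k l =>
    (if (k : ℕ) = 1 ∧ (l : ℕ) = 1 then μ else 0)
      + (if (l : ℕ) = 1 then v₀ k else 0)
      + (if (k : ℕ) = 1 then w₀ l else 0)
      + D k l

/-- The Lie bracket of the almost abelian Lie algebra `g = ℝ e₀ ⋉_L u`:
`[e₀, u] = L u` for `u ∈ u = span{e₁, …, e_{2n-1}}` and `[u, v] = 0` for `u, v ∈ u`. -/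
def br {n : ℕ} (L : Matrix (Fin (2*n)) (Fin (2*n)) ℝ) (x y : G n) : G n :=
  inn x (E n 0) • L.mulVec y - inn y (E n 0) • L.mulVec x

/-- `nabla` is the Levi-Civita connection of `⟨·,·⟩`, i.e. it satisfies the Koszul
formula `2⟨∇_x y, z⟩ = ⟨[x,y],z⟩ − ⟨[y,z],x⟩ + ⟨[z,x],y⟩`. -/
def Koszul {n : ℕ} (L : Matrix (Fin (2*n)) (Fin (2*n)) ℝ) (nabla : G n → G n → G n) : Prop :=
  ∀ x y z : G n, 2 * inn (nabla x y) z
    = inn (br L x y) z - inn (br L y z) x + inn (br L z x) y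

/-- `(∇_y J)(x) = ∇_y (Jx) − J ∇_y x`. -/
def covJ {n : ℕ} (nabla : G n → G n → G n) (y x : G n) : G n :=
  nabla y ((Jm n).mulVec x) - (Jm n).mulVec (nabla y x)

/-- The rough Laplacian
`(∇*∇J)(x) = Σ_i ((∇_{e_i}(∇_{e_i}J))(x) − (∇_{∇_{e_i}e_i} J)(x))`. -/
def roughLap {n : ℕ} (nabla : G n → G n → G n) (x : G n) : G n :=
  ∑ i : Fin (2*n),
    (nabla (E n i.val) (covJ nabla (E n i.val) x)
      - covJ nabla (E n i.val) (nabla (E n i.val) x)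
      - covJ nabla (nabla (E n i.val) (E n i.val)) x)

/-- `J` is harmonic: `J ∘ (∇*∇J) = (∇*∇J) ∘ J`. -/
def Harmonic {n : ℕ} (nabla : G n → G n → G n) : Prop :=
  ∀ x : G n, (Jm n).mulVec (roughLap nabla x) = roughLap nabla ((Jm n).mulVec x)

/-- Symmetric part of a matrix. -/
def symPart {n : ℕ} (M : Matrix (Fin (2*n)) (Fin (2*n)) ℝ) :
    Matrix (Fin (2*n)) (Fin (2*n)) ℝ := (1/2 : ℝ) • (M + Mᵀ)

/-- Skew-symmetric part of a matrix. -/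
def skewPart {n : ℕ} (M : Matrix (Fin (2*n)) (Fin (2*n)) ℝ) :
    Matrix (Fin (2*n)) (Fin (2*n)) ℝ := (1/2 : ℝ) • (M - Mᵀ)

/-- `γ = (v₀ + w₀)/2`. -/
def gam {n : ℕ} (v₀ w₀ : G n) : G n := (1/2 : ℝ) • (v₀ + w₀)

/-- `ρ = (v₀ − w₀)/2`. -/
def rho {n : ℕ} (v₀ w₀ : G n) : G n := (1/2 : ℝ) • (v₀ - w₀)

/-- The fundamental 2-form `ω(x,y) = ⟨Jx, y⟩`. -/
def om {n : ℕ} (x y : G n) : ℝ := inn ((Jm n).mulVec x) y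

/-- `(∇_x ω)(y,z) = −ω(∇_x y, z) − ω(y, ∇_x z)`. -/
def nablaOm {n : ℕ} (nabla : G n → G n → G n) (x y z : G n) : ℝ :=
  - om (nabla x y) z - om y (nabla x z)

/-- `dω(x,y,z) = −ω([x,y],z) − ω([y,z],x) − ω([z,x],y)`. -/
def dOm {n : ℕ} (L : Matrix (Fin (2*n)) (Fin (2*n)) ℝ) (x y z : G n) : ℝ :=
  - om (br L x y) z - om (br L y z) x - om (br L z x) y

/-- The codifferential `δω(x) = −Σ_i (∇_{e_i}ω)(e_i, x)`. -/
def deltaOm {n : ℕ} (nabla : G n → G n → G n) (x : G n) : ℝ :=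
  - ∑ i : Fin (2*n), nablaOm nabla (E n i.val) (E n i.val) x

/-- The Nijenhuis tensor `N(x,y) = [x,y] + J([Jx,y] + [x,Jy]) − [Jx,Jy]`. -/
def Nij {n : ℕ} (L : Matrix (Fin (2*n)) (Fin (2*n)) ℝ) (x y : G n) : G n :=
  br L x y
    + (Jm n).mulVec (br L ((Jm n).mulVec x) y + br L x ((Jm n).mulVec y))
    - br L ((Jm n).mulVec x) ((Jm n).mulVec y)

/-- `T⁻(x,y,z) = (∇_x ω)(y,z) − (∇_{Jx} ω)(Jy,z)`. -/
def Tminus {n : ℕ} (nabla : G n → G n → G n) (x y z : G n) : ℝ :=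
  nablaOm nabla x y z - nablaOm nabla ((Jm n).mulVec x) ((Jm n).mulVec y) z

/-- `T⁺(x,y,z) = (∇_x ω)(y,z) + (∇_{Jx} ω)(Jy,z)`. -/
def Tplus {n : ℕ} (nabla : G n → G n → G n) (x y z : G n) : ℝ :=
  nablaOm nabla x y z + nablaOm nabla ((Jm n).mulVec x) ((Jm n).mulVec y) z

/-- `U(x,y,z) = ⟨x,y⟩δω(z) − ⟨x,z⟩δω(y) − ⟨x,Jy⟩δω(Jz) + ⟨x,Jz⟩δω(Jy)`. -/
def Uten {n : ℕ} (nabla : G n → G n → G n) (x y z : G n) : ℝ :=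
  inn x y * deltaOm nabla z - inn x z * deltaOm nabla y
    - inn x ((Jm n).mulVec y) * deltaOm nabla ((Jm n).mulVec z)
    + inn x ((Jm n).mulVec z) * deltaOm nabla ((Jm n).mulVec y)

/-- The Lee form `θ(x) = −(1/(n−1)) δω(Jx)`. -/
def Lee {n : ℕ} (nabla : G n → G n → G n) (x : G n) : ℝ :=
  -(1/((n : ℝ) - 1)) * deltaOm nabla ((Jm n).mulVec x)

/-- The identity of `a`, extended by zero to `g`. -/
def Ia (n : ℕ) : Matrix (Fin (2*n)) (Fin (2*n)) ℝ :=
  Matrix.of fun k l => if k = l ∧ 2 ≤ (k : ℕ) then (1 : ℝ) else 0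



section AuxLemmas

variable {n : ℕ}

lemma inn_E (x : G n) (m : ℕ) (hm : m < 2*n) : inn x (E n m) = x ⟨m, hm⟩ := by
  unfold inn E
  rw [Finset.sum_eq_single (⟨m, hm⟩ : Fin (2*n))]
  · simp
  · intro l _ hl
    rw [if_neg (fun h => hl (Fin.ext h)), mul_zero]
  · intro h; exact absurd (Finset.mem_univ _) h

lemma mulVec_E (M : Matrix (Fin (2*n)) (Fin (2*n)) ℝ) (m : ℕ) (hm : m < 2*n)
    (k : Fin (2*n)) : (M.mulVec (E n m)) k = M k ⟨m, hm⟩ := by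
  unfold Matrix.mulVec dotProduct E
  rw [Finset.sum_eq_single (⟨m, hm⟩ : Fin (2*n))]
  · simp
  · intro l _ hl
    rw [if_neg (fun h => hl (Fin.ext h)), mul_zero]
  · intro h; exact absurd (Finset.mem_univ _) h

lemma even_succ_lt (k : Fin (2*n)) (hk : Even (k:ℕ)) : (k:ℕ)+1 < 2*n := by
  obtain ⟨r, hr⟩ := hk
  have := k.isLt
  omega

lemma Jmv_even (x : G n) (k : Fin (2*n)) (hk : Even (k:ℕ)) :
    ((Jm n).mulVec x) k = -x ⟨(k:ℕ)+1, even_succ_lt k hk⟩ := by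
  unfold Matrix.mulVec dotProduct Jm
  rw [Finset.sum_eq_single (⟨(k:ℕ)+1, even_succ_lt k hk⟩ : Fin (2*n))]
  · simp only [Matrix.of_apply]
    split_ifs with hc1 hc2
    · exfalso
      have ha : (k:ℕ) = (k:ℕ)+1+1 := hc1.1
      omega
    · ring
    · exact absurd ⟨by trivial, hk⟩ hc2
  · intro l _ hl
    have hl' : (l:ℕ) ≠ (k:ℕ)+1 := fun h => hl (Fin.ext h)
    obtain ⟨r, hr⟩ := hk
    simp only [Matrix.of_apply]
    split_ifs with h1 h2
    · obtain ⟨ha, s, hs⟩ := h1; omega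
    · exact absurd h2.1 hl'
    · exact zero_mul _
  · intro h; exact absurd (Finset.mem_univ _) h

lemma Jmv_odd (x : G n) (k : Fin (2*n)) (hk : ¬ Even (k:ℕ)) :
    ((Jm n).mulVec x) k = x ⟨(k:ℕ)-1, Nat.lt_of_le_of_lt (Nat.sub_le _ _) k.isLt⟩ := by
  have hk1 : 1 ≤ (k:ℕ) := by
    rcases Nat.eq_zero_or_pos (k:ℕ) with h | h
    · exact absurd (h ▸ Even.zero) hk
    · exact h
  have hke : Even ((k:ℕ)-1) := by
    rcases Nat.even_or_odd (k:ℕ) with h | h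
    · exact absurd h hk
    · obtain ⟨r, hr⟩ := h; exact ⟨r, by omega⟩
  unfold Matrix.mulVec dotProduct Jm
  rw [Finset.sum_eq_single (⟨(k:ℕ)-1, Nat.lt_of_le_of_lt (Nat.sub_le _ _) k.isLt⟩ : Fin (2*n))]
  · simp only [Matrix.of_apply]
    rw [if_pos ⟨by omega, hke⟩, one_mul]
  · intro l _ hl
    have hl' : (l:ℕ) ≠ (k:ℕ)-1 := fun h => hl (Fin.ext h)
    simp only [Matrix.of_apply]
    split_ifs with h1 h2
    · exact absurd (by omega : (l:ℕ) = (k:ℕ)-1) hl'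
    · obtain ⟨ha, s, hs⟩ := h2
      obtain ⟨r, hr⟩ := hke
      omega
    · exact zero_mul _
  · intro h; exact absurd (Finset.mem_univ _) h

lemma JJ (x : G n) : (Jm n).mulVec ((Jm n).mulVec x) = -x := by
  funext k
  by_cases hk : Even (k:ℕ)
  · rw [Jmv_even _ k hk]
    rw [Jmv_odd x ⟨(k:ℕ)+1, even_succ_lt k hk⟩
      (by simp only [Fin.val_mk, Nat.even_add_one, not_not]; exact hk)]
    simp only [Pi.neg_apply]
    congr 1
  · rw [Jmv_odd _ k hk]
    have hk1 : 1 ≤ (k:ℕ) := by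
      rcases Nat.eq_zero_or_pos (k:ℕ) with h | h
      · exact absurd (h ▸ Even.zero) hk
      · exact h
    have hke0 : Even ((k:ℕ)-1) := by
      rcases Nat.even_or_odd (k:ℕ) with h | h
      · exact absurd h hk
      · obtain ⟨r, hr⟩ := h; exact ⟨r, by omega⟩
    have hke : Even (((⟨(k:ℕ)-1, Nat.lt_of_le_of_lt (Nat.sub_le _ _) k.isLt⟩ : Fin (2*n))):ℕ) := by
      simpa using hke0
    rw [Jmv_even x _ hke]
    simp only [Pi.neg_apply]
    congr 1
    exact congrArg x (Fin.ext (show (k:ℕ)-1+1 = (k:ℕ) by omega))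

lemma Jmv0 (x : G n) (h0 : 0 < 2*n) (h1 : 1 < 2*n) :
    ((Jm n).mulVec x) ⟨0, h0⟩ = -x ⟨1, h1⟩ := by
  rw [Jmv_even x ⟨0, h0⟩ (Even.zero)]

lemma Jmv1 (x : G n) (h0 : 0 < 2*n) (h1 : 1 < 2*n) :
    ((Jm n).mulVec x) ⟨1, h1⟩ = x ⟨0, h0⟩ := by
  rw [Jmv_odd x ⟨1, h1⟩ (by simp)]
  exact congrArg x (Fin.ext rfl)

lemma J_e0 (h0 : 0 < 2*n) (h1 : 1 < 2*n) : (Jm n).mulVec (E n 0) = E n 1 := by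
  funext k
  rw [mulVec_E _ 0 h0]
  unfold Jm E
  simp only [Matrix.of_apply, Fin.val_mk]
  by_cases hk : (k:ℕ) = 1
  · rw [if_pos ⟨hk, Even.zero⟩, if_pos hk]
  · rw [if_neg (fun h => hk h.1), if_neg (fun h => absurd h.1 (by omega)), if_neg hk]

lemma J_inA (x : G n) (hx : inA x) : inA ((Jm n).mulVec x) := by
  intro i hi
  rcases (by omega : (i:ℕ) = 0 ∨ (i:ℕ) = 1) with hiv | hiv
  · rw [Jmv_even x i (by rw [hiv]; exact Even.zero)]
    rw [hx ⟨(i:ℕ)+1, even_succ_lt i (by rw [hiv]; exact Even.zero)⟩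
      (by simp only [Fin.val_mk]; omega), neg_zero]
  · rw [Jmv_odd x i (by rw [hiv]; decide)]
    exact hx _ (by simp only [Fin.val_mk]; omega)

lemma Dmv_inA {D : Matrix (Fin (2*n)) (Fin (2*n)) ℝ} (hD : DinA D) (x : G n) :
    inA (D.mulVec x) := by
  intro i hi
  show (∑ l, D i l * x l) = 0
  apply Finset.sum_eq_zero
  intro l _
  rw [hD i l (Or.inl hi), zero_mul]

lemma Dmv_proj {D : Matrix (Fin (2*n)) (Fin (2*n)) ℝ} (hD : DinA D) (x y : G n)
    (hxy : ∀ i : Fin (2*n), 2 ≤ (i:ℕ) → x i = y i) : D.mulVec x = D.mulVec y := by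
  funext k
  show (∑ l, D k l * x l) = ∑ l, D k l * y l
  apply Finset.sum_congr rfl
  intro l _
  by_cases hl : (l:ℕ) < 2
  · rw [hD k l (Or.inr hl)]; simp
  · rw [hxy l (by omega)]

lemma Dcomm_ext {D : Matrix (Fin (2*n)) (Fin (2*n)) ℝ} (hD : DinA D)
    (hcomm : ∀ x : G n, inA x → D.mulVec ((Jm n).mulVec x) = (Jm n).mulVec (D.mulVec x))
    (x : G n) : D.mulVec ((Jm n).mulVec x) = (Jm n).mulVec (D.mulVec x) := by
  set Pa : G n := fun k => if (k:ℕ) < 2 then 0 else x k with hPa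
  have hPainA : inA Pa := fun i hi => by simp [hPa, hi]; intro h; omega
  have hproj : ∀ i : Fin (2*n), 2 ≤ (i:ℕ) → Pa i = x i := by
    intro i hi; simp [hPa]; omega
  have hJproj : ∀ i : Fin (2*n), 2 ≤ (i:ℕ) →
      ((Jm n).mulVec x) i = ((Jm n).mulVec Pa) i := by
    intro i hi
    by_cases hie : Even (i:ℕ)
    · rw [Jmv_even x i hie, Jmv_even Pa i hie,
        hproj ⟨(i:ℕ)+1, even_succ_lt i hie⟩ (show 2 ≤ (i:ℕ)+1 by omega)]
    · obtain ⟨r, hr⟩ := Nat.odd_iff.mpr (Nat.not_even_iff.mp hie)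
      rw [Jmv_odd x i hie, Jmv_odd Pa i hie,
        hproj ⟨(i:ℕ)-1, Nat.lt_of_le_of_lt (Nat.sub_le _ _) i.isLt⟩ (show 2 ≤ (i:ℕ)-1 by omega)]
  calc D.mulVec ((Jm n).mulVec x) = D.mulVec ((Jm n).mulVec Pa) := Dmv_proj hD _ _ hJproj
    _ = (Jm n).mulVec (D.mulVec Pa) := hcomm Pa hPainA
    _ = (Jm n).mulVec (D.mulVec x) := by
        rw [Dmv_proj hD Pa x (fun i hi => hproj i hi)]

lemma Lmv (μ : ℝ) (v₀ w₀ : G n) (D : Matrix (Fin (2*n)) (Fin (2*n)) ℝ)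
    (x : G n) (h1 : 1 < 2*n) (k : Fin (2*n)) :
    ((Lm μ v₀ w₀ D).mulVec x) k
      = (if (k:ℕ) = 1 then μ * x ⟨1, h1⟩ else 0) + v₀ k * x ⟨1, h1⟩
        + (if (k:ℕ) = 1 then inn w₀ x else 0) + (D.mulVec x) k := by
  have e2 : ∀ (c : ℝ), (∑ l : Fin (2*n), (if (l:ℕ) = 1 then c else 0) * x l) = c * x ⟨1, h1⟩ := by
    intro c
    rw [Finset.sum_eq_single (⟨1, h1⟩ : Fin (2*n))]
    · simp
    · intro l _ hl
      rw [if_neg (fun h => hl (Fin.ext h)), zero_mul]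
    · intro h; exact absurd (Finset.mem_univ _) h
  show (∑ l, Lm μ v₀ w₀ D k l * x l) = _
  unfold Lm
  simp only [Matrix.of_apply, add_mul]
  rw [Finset.sum_add_distrib, Finset.sum_add_distrib, Finset.sum_add_distrib]
  congr 1
  · congr 1
    · congr 1
      · by_cases hk : (k:ℕ) = 1
        · simp only [hk, true_and, if_true]
          exact e2 μ
        · simp only [hk, false_and, if_false, zero_mul]
          simp
      · exact e2 (v₀ k)
    · by_cases hk : (k:ℕ) = 1
      · simp only [hk, if_true]
        rfl
      · simp only [hk, if_false, zero_mul]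
        simp

end AuxLemmas

/-- `N = 0` (`J` integrable; Hermitian, class `W₃⊕W₄`) iff `w₀ = 0`
and `D J' = J' D`. -/
theorem statement10 (n : ℕ) (hn : 2 ≤ n) (μ : ℝ) (v₀ w₀ : G n) (hv : inA v₀) (hw : inA w₀)
    (D : Matrix (Fin (2*n)) (Fin (2*n)) ℝ) (hD : DinA D) :
    (∀ x y : G n, Nij (Lm μ v₀ w₀ D) x y = 0)
      ↔ (w₀ = 0 ∧ (∀ x : G n, inA x → (D).mulVec ((Jm n).mulVec x) = (Jm n).mulVec ((D).mulVec x))) := by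
  have h0 : 0 < 2*n := by omega
  have h1 : 1 < 2*n := by omega
  constructor
  · intro hN
    have key : ∀ y : G n, inA y →
        (Lm μ v₀ w₀ D).mulVec y
          + (Jm n).mulVec ((Lm μ v₀ w₀ D).mulVec ((Jm n).mulVec y)) = 0 := by
      intro y hy
      have hthis := hN (E n 0) y
      unfold Nij br at hthis
      rw [J_e0 h0 h1] at hthis
      rw [inn_E (E n 0) 0 h0, inn_E y 0 h0, inn_E (E n 1) 0 h0,
        inn_E ((Jm n).mulVec y) 0 h0] at hthis
      rw [Jmv0 y h0 h1, hy ⟨0,h0⟩ (by norm_num), hy ⟨1,h1⟩ (by norm_num)] at hthis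
      have e00 : (E n 0) (⟨0,h0⟩ : Fin (2*n)) = 1 := by simp [E]
      rw [e00] at hthis
      have e10 : (E n 1) (⟨0,h0⟩ : Fin (2*n)) = 0 := by simp [E]
      rw [e10] at hthis
      simp only [neg_zero, zero_smul, one_smul, sub_zero, zero_add, add_zero] at hthis
      exact hthis
    have hw0 : w₀ = 0 := by
      funext l
      by_cases hl : (l:ℕ) < 2
      · rw [hw l hl]; rfl
      · have hEl : inA (E n (l:ℕ)) := by
          intro i hi
          simp only [E]
          rw [if_neg (by omega)]
        have hk := congrFun (key (E n (l:ℕ)) hEl) ⟨1,h1⟩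
        simp only [Pi.add_apply, Pi.zero_apply] at hk
        rw [Lmv μ v₀ w₀ D (E n (l:ℕ)) h1 ⟨1,h1⟩, Jmv1 _ h0 h1,
          Lmv μ v₀ w₀ D ((Jm n).mulVec (E n (l:ℕ))) h1 ⟨0,h0⟩] at hk
        have hE1 : (E n (l:ℕ)) ⟨1,h1⟩ = 0 := by
          simp only [E]
          rw [if_neg (by omega)]
        have hwl : inn w₀ (E n (l:ℕ)) = w₀ l := by
          rw [inn_E w₀ (l:ℕ) l.isLt]
        rw [hE1, hwl, hv ⟨1,h1⟩ (by norm_num), hv ⟨0,h0⟩ (by norm_num),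
          Dmv_inA hD (E n (l:ℕ)) ⟨1,h1⟩ (by norm_num),
          Dmv_inA hD ((Jm n).mulVec (E n (l:ℕ))) ⟨0,h0⟩ (by norm_num)] at hk
        simp only [Fin.val_mk] at hk
        norm_num at hk
        simpa using hk
    refine ⟨hw0, fun x hx => ?_⟩
    have hLa : ∀ z : G n, inA z → (Lm μ v₀ w₀ D).mulVec z = D.mulVec z := by
      intro z hz
      funext k
      rw [Lmv μ v₀ w₀ D z h1 k, hz ⟨1,h1⟩ (by norm_num), hw0]
      have hinn : inn (0 : G n) z = 0 := by simp [inn]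
      rw [hinn]
      simp
    have k1 := key ((Jm n).mulVec x) (J_inA x hx)
    rw [hLa _ (J_inA x hx), JJ x, Matrix.mulVec_neg x (Lm μ v₀ w₀ D), hLa x hx,
      Matrix.mulVec_neg (D.mulVec x) (Jm n)] at k1
    rwa [add_neg_eq_zero] at k1
  · rintro ⟨hw0, hcomm⟩ x y
    subst hw0
    have hc := Dcomm_ext hD hcomm
    have hL : ∀ z : G n, (Lm μ v₀ 0 D).mulVec z
        = z ⟨1,h1⟩ • (fun k => (if (k:ℕ) = 1 then μ else 0) + v₀ k : G n) + D.mulVec z := by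
      intro z
      funext k
      have hinn : inn (0 : G n) z = 0 := by simp [inn]
      rw [Lmv μ v₀ 0 D z h1 k, hinn]
      simp only [Pi.add_apply, Pi.smul_apply, smul_eq_mul]
      split_ifs with hk <;> ring
    have jx0 : inn ((Jm n).mulVec x) (E n 0) = -x ⟨1,h1⟩ := by
      rw [inn_E _ 0 h0]; exact Jmv0 x h0 h1
    have jy0 : inn ((Jm n).mulVec y) (E n 0) = -y ⟨1,h1⟩ := by
      rw [inn_E _ 0 h0]; exact Jmv0 y h0 h1
    unfold Nij br
    rw [inn_E x 0 h0, inn_E y 0 h0, jx0, jy0]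
    rw [hL y, hL x, hL ((Jm n).mulVec x), hL ((Jm n).mulVec y)]
    rw [Jmv1 x h0 h1, Jmv1 y h0 h1, hc x, hc y]
    simp only [Matrix.mulVec_add, Matrix.mulVec_sub, Matrix.mulVec_smul]
    rw [JJ (D.mulVec x), JJ (D.mulVec y)]
    funext k
    simp only [Pi.add_apply, Pi.sub_apply, Pi.smul_apply, Pi.neg_apply, Pi.zero_apply,
      smul_eq_mul]
    ring
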